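/- Let g : ℝ → [0,∞] be measurable, positive almost everywhere, locally Lebesgue integrable, and satisfy ∫_{-∞}^0 g(t) dt = ∫_0^∞ g(t) dt = ∞. Then for every x ∈ ℝ the equation ∫_{x-s}^{x+s} g(t) dt = 1 has a unique solution s(x) ∈ (0,∞), and the resulting function s : ℝ → (0,∞) satisfies |s(x+t) − s(x)| ≤ |t| whenever |t| ≤ s(x); in particular, s is continuous on ℝ. -/

import Mathlib

open MeasureTheory Filter Topology
open scoped ENNReal RealInnerProductSpace

noncomputable section

/-- Conditions (1.2): `r, q` measurable, `r > 0`, `q ≥ 0`, with `1/r` and `q`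
locally Lebesgue integrable on `ℝ`. -/
def Cond12 (r q : ℝ → ℝ) : Prop :=
  Measurable r ∧ Measurable q ∧ (∀ x, 0 < r x) ∧ (∀ x, 0 ≤ q x) ∧
    LocallyIntegrable (fun t => 1 / r t) volume ∧ LocallyIntegrable q volume

/-- Condition (1.3): for every `x`,
`(∫_{x-d}^x dt/r(t)) · (∫_{x-d}^x q(t) dt) → ∞` as `|d| → ∞`. -/
def Cond13 (r q : ℝ → ℝ) : Prop :=
  ∀ x : ℝ, Tendsto (fun d : ℝ => (∫ t in x - d..x, 1 / r t) * (∫ t in x - d..x, q t))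
    (cocompact ℝ) atTop

/-- Condition (2.1): `∫_{-∞}^x q > 0` and `∫_x^∞ q > 0` for every `x`. -/
def Cond21 (q : ℝ → ℝ) : Prop :=
  ∀ x : ℝ, 0 < ∫⁻ t in Set.Iic x, ENNReal.ofReal (q t) ∧
    0 < ∫⁻ t in Set.Ici x, ENNReal.ofReal (q t)

/-- A principal fundamental system of solutions `u, v` (with a.e. derivatives
`u', v'`) of the equation `(r z')' = q z`:  `u, v, r u', r v'` are locally
absolutely continuous (expressed through the integral identities below),
`(r u')' = q u` and `(r v')' = q v` a.e., `u > 0`, `v > 0`, `v' ≥ 0`, `u' ≤ 0`,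
`r (v' u - u' v) ≡ 1`, `v/u → 0` at `-∞`, `u/v → 0` at `+∞`,
`∫_{-∞}^0 dt/(r u²) < ∞` and `∫_0^∞ dt/(r v²) < ∞`. -/
structure PFSS (r q u v u' v' : ℝ → ℝ) : Prop where
  u_pos : ∀ x, 0 < u x
  v_pos : ∀ x, 0 < v x
  u'_nonpos : ∀ x, u' x ≤ 0
  v'_nonneg : ∀ x, 0 ≤ v' x
  u'_intble : ∀ a b : ℝ, IntervalIntegrable u' volume a b
  v'_intble : ∀ a b : ℝ, IntervalIntegrable v' volume a b
  u_deriv : ∀ a b : ℝ, u b - u a = ∫ t in a..b, u' t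
  v_deriv : ∀ a b : ℝ, v b - v a = ∫ t in a..b, v' t
  ru'_deriv : ∀ a b : ℝ, r b * u' b - r a * u' a = ∫ t in a..b, q t * u t
  rv'_deriv : ∀ a b : ℝ, r b * v' b - r a * v' a = ∫ t in a..b, q t * v t
  wronskian : ∀ x, r x * (v' x * u x - u' x * v x) = 1
  ratio_bot : Tendsto (fun x => v x / u x) atBot (𝓝 0)
  ratio_top : Tendsto (fun x => u x / v x) atTop (𝓝 0)
  int_u : ∫⁻ t in Set.Iic (0:ℝ), ENNReal.ofReal (1 / (r t * u t ^ 2)) < ⊤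
  int_v : ∫⁻ t in Set.Ici (0:ℝ), ENNReal.ofReal (1 / (r t * v t ^ 2)) < ⊤

/-- The Green kernel `G(x,t) = u(x) v(t)` for `x ≥ t`, `u(t) v(x)` for `x ≤ t`. -/
def greenKernel (u v : ℝ → ℝ) (x t : ℝ) : ℝ :=
  if t ≤ x then u x * v t else u t * v x

/-- The space `L_p(ℝ)` (with respect to Lebesgue measure). -/
abbrev LpR (p : ℝ≥0∞) : Type := Lp ℝ p (volume : Measure ℝ)

/-- `G` is (a bounded realization on `L_p` of) the Green operator
`(G f)(x) = ∫_ℝ G(x,t) f(t) dt`. -/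
def IsGreenOp (u v : ℝ → ℝ) (p : ℝ≥0∞) [Fact (1 ≤ p)]
    (G : LpR p →L[ℝ] LpR p) : Prop :=
  ∀ f : LpR p,
    (G f : ℝ → ℝ) =ᵐ[volume] fun x => ∫ t, greenKernel u v x t * (f : ℝ → ℝ) t

/-- `d₁` solves `(∫_{x-d}^x dt/r)(∫_{x-d}^x q dt) = 1`, `d₁ > 0`. -/
def IsD1 (r q d₁ : ℝ → ℝ) : Prop :=
  ∀ x : ℝ, 0 < d₁ x ∧
    (∫ t in x - d₁ x..x, 1 / r t) * (∫ t in x - d₁ x..x, q t) = 1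

/-- `d₂` solves `(∫_x^{x+d} dt/r)(∫_x^{x+d} q dt) = 1`, `d₂ > 0`. -/
def IsD2 (r q d₂ : ℝ → ℝ) : Prop :=
  ∀ x : ℝ, 0 < d₂ x ∧
    (∫ t in x..x + d₂ x, 1 / r t) * (∫ t in x..x + d₂ x, q t) = 1

/-- `φ(x) = ∫_{x-d₁(x)}^x dt/r(t)`. -/
def phiF (r d₁ : ℝ → ℝ) (x : ℝ) : ℝ := ∫ t in x - d₁ x..x, 1 / r t

/-- `ψ(x) = ∫_x^{x+d₂(x)} dt/r(t)`. -/
def psiF (r d₂ : ℝ → ℝ) (x : ℝ) : ℝ := ∫ t in x..x + d₂ x, 1 / r t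

/-- `h(x) = φ(x)ψ(x)/(φ(x)+ψ(x))`. -/
def hF (r d₁ d₂ : ℝ → ℝ) (x : ℝ) : ℝ :=
  phiF r d₁ x * psiF r d₂ x / (phiF r d₁ x + psiF r d₂ x)

/-- `d` solves `∫_{x-d(x)}^{x+d(x)} dt/(r(t)h(t)) = 1`, `d > 0`. -/
def IsD (r h d : ℝ → ℝ) : Prop :=
  ∀ x : ℝ, 0 < d x ∧ (∫ t in x - d x..x + d x, 1 / (r t * h t)) = 1

/-- `s` solves `∫_{x-s(x)}^{x+s(x)} dt/(r(t)ρ(t)) = 1`, `s > 0`. -/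
def IsS (r ρ s : ℝ → ℝ) : Prop :=
  ∀ x : ℝ, 0 < s x ∧ (∫ t in x - s x..x + s x, 1 / (r t * ρ t)) = 1


section AuxLemmasForLemma210
open Set

lemma auxLem_forall_one_div {a t : ℝ} (h : ∀ n : ℕ, a - 1/(n+1) < t) : a ≤ t := by
  by_contra h'
  push_neg at h'
  obtain ⟨n, hn⟩ := exists_nat_one_div_lt (sub_pos.mpr h')
  have := h n
  linarith

lemma auxLem_strict (μ : Measure ℝ)
    (hfin : ∀ a b : ℝ, μ (Ioc a b) ≠ ⊤)
    (hpos : ∀ a b : ℝ, a < b → 0 < μ (Ioc a b))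
    (x a b : ℝ) (ha : 0 < a) (hab : a < b) :
    μ (Ioc (x - a) (x + a)) < μ (Ioc (x - b) (x + b)) := by
  have h1 : Ioc (x - a) (x + a) ∪ Ioc (x + a) (x + b) = Ioc (x - a) (x + b) :=
    Set.Ioc_union_Ioc_eq_Ioc (by linarith) (by linarith)
  have hdisj : Disjoint (Ioc (x - a) (x + a)) (Ioc (x + a) (x + b)) :=
    Set.Ioc_disjoint_Ioc_of_le le_rfl
  have h2 : μ (Ioc (x - a) (x + a)) + μ (Ioc (x + a) (x + b)) = μ (Ioc (x - a) (x + b)) := by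
    rw [← measure_union hdisj measurableSet_Ioc, h1]
  calc μ (Ioc (x - a) (x + a))
      < μ (Ioc (x - a) (x + a)) + μ (Ioc (x + a) (x + b)) :=
        ENNReal.lt_add_right (hfin _ _) (hpos _ _ (by linarith)).ne'
    _ = μ (Ioc (x - a) (x + b)) := h2
    _ ≤ μ (Ioc (x - b) (x + b)) := measure_mono (Set.Ioc_subset_Ioc (by linarith) le_rfl)

lemma auxLem_exists (μ : Measure ℝ)
    (hfin : ∀ a b : ℝ, μ (Ioc a b) ≠ ⊤)
    (hpos : ∀ a b : ℝ, a < b → 0 < μ (Ioc a b))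
    (hatom : ∀ y : ℝ, μ {y} = 0)
    (hbot : μ (Iic 0) = ⊤) (x : ℝ) :
    ∃ s : ℝ, 0 < s ∧ μ (Ioc (x - s) (x + s)) = 1 := by
  set S : Set ℝ := {s | 1 ≤ μ (Ioc (x - s) (x + s))} with hSdef
  have hmemS : ∀ s : ℝ, s ∈ S ↔ 1 ≤ μ (Ioc (x - s) (x + s)) := fun s => Iff.rfl
  -- S is nonempty
  have hmono : Monotone (fun n : ℕ => Ioc (x - n) (x + n)) := by
    intro n m hnm
    have hc : (n : ℝ) ≤ m := Nat.cast_le.mpr hnm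
    exact Ioc_subset_Ioc (by linarith) (by linarith)
  have huniv : (⋃ n : ℕ, Ioc (x - n) (x + n)) = univ := by
    ext t
    simp only [mem_iUnion, mem_univ, iff_true, mem_Ioc]
    refine ⟨⌈|t - x|⌉₊ + 1, ?_, ?_⟩
    · have h1 : |t - x| < ((⌈|t - x|⌉₊ + 1 : ℕ) : ℝ) := by
        push_cast
        have := Nat.le_ceil |t - x|
        linarith
      have h2 := abs_lt.mp h1
      push_cast at h2 ⊢
      linarith [h2.1]
    · have h1 : |t - x| < ((⌈|t - x|⌉₊ + 1 : ℕ) : ℝ) := by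
        push_cast
        have := Nat.le_ceil |t - x|
        linarith
      have h2 := abs_lt.mp h1
      push_cast at h2 ⊢
      linarith [h2.2]
  have hsup : (⨆ n : ℕ, μ (Ioc (x - n) (x + n))) = ⊤ := by
    rw [← Directed.measure_iUnion hmono.directed_le, huniv]
    exact le_antisymm le_top (hbot ▸ measure_mono (subset_univ (Iic 0)))
  obtain ⟨n₀, hn₀⟩ : ∃ n : ℕ, 1 ≤ μ (Ioc (x - n) (x + n)) := by
    by_contra h
    push_neg at h
    have h1 : (⨆ n : ℕ, μ (Ioc (x - n) (x + n))) ≤ 1 := iSup_le fun n => (h n).le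
    rw [hsup] at h1
    simp at h1
  have hne : S.Nonempty := ⟨n₀, hn₀⟩
  -- small s are not in S
  have hsmall : ∃ n : ℕ, μ (Ioc (x - 1/(n+1)) (x + 1/(n+1))) < 1 := by
    have hanti : Antitone (fun n : ℕ => Ioc (x - 1/(n+1)) (x + 1/(n+1))) := by
      intro n m hnm
      have hn0 : (0:ℝ) ≤ n := n.cast_nonneg
      have hc : (n : ℝ) ≤ m := Nat.cast_le.mpr hnm
      have hd : 1/((m:ℝ)+1) ≤ 1/((n:ℝ)+1) := by
        apply one_div_le_one_div_of_le <;> linarith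
      exact Ioc_subset_Ioc (by linarith) (by linarith)
    have hint : (⋂ n : ℕ, Ioc (x - 1/(n+1)) (x + 1/(n+1))) = {x} := by
      ext t
      simp only [mem_iInter, mem_Ioc, mem_singleton_iff]
      constructor
      · intro h
        have h1 : x ≤ t := auxLem_forall_one_div fun n => (h n).1
        have h2 : t ≤ x := by
          by_contra h'
          push_neg at h'
          obtain ⟨m, hm⟩ := exists_nat_one_div_lt (sub_pos.mpr h')
          have := (h m).2
          linarith
        linarith
      · rintro rfl n
        have h1 : (0:ℝ) < 1/((n:ℝ)+1) := by positivity
        exact ⟨by linarith, by linarith⟩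
    have hmeas := Directed.measure_iInter (fun n => measurableSet_Ioc.nullMeasurableSet)
      hanti.directed_ge ⟨0, hfin _ _⟩
    rw [hint, hatom x] at hmeas
    by_contra h
    push_neg at h
    have h1 : (1:ℝ≥0∞) ≤ ⨅ n : ℕ, μ (Ioc (x - 1/(n+1)) (x + 1/(n+1))) := le_iInf fun n => h n
    rw [← hmeas] at h1
    simp at h1
  obtain ⟨n₁, hn₁⟩ := hsmall
  set ε : ℝ := 1/(n₁+1) with hεdef
  have hε : 0 < ε := by positivity
  have hlb : ∀ s ∈ S, ε ≤ s := by
    intro s hs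
    rw [hmemS] at hs
    by_contra h
    push_neg at h
    have hsub : μ (Ioc (x - s) (x + s)) ≤ μ (Ioc (x - ε) (x + ε)) :=
      measure_mono (Ioc_subset_Ioc (by linarith) (by linarith))
    exact absurd (hs.trans hsub) (not_le.mpr hn₁)
  have hbdd : BddBelow S := ⟨ε, hlb⟩
  set s₀ : ℝ := sInf S with hs₀def
  have hs₀pos : 0 < s₀ := lt_of_lt_of_le hε (le_csInf hne hlb)
  -- lower bound: 1 ≤ μ (Ioc (x - s₀) (x + s₀))
  have hge : 1 ≤ μ (Ioc (x - s₀) (x + s₀)) := by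
    have hseq : ∀ n : ℕ, 1 ≤ μ (Ioc (x - (s₀ + 1/(n+1))) (x + (s₀ + 1/(n+1)))) := by
      intro n
      have h1 : (0:ℝ) < 1/((n:ℝ)+1) := by positivity
      obtain ⟨s, hsS, hss⟩ := exists_lt_of_csInf_lt hne (show sInf S < s₀ + 1/(n+1) by
        rw [← hs₀def]; linarith)
      rw [hmemS] at hsS
      exact hsS.trans (measure_mono (Ioc_subset_Ioc (by linarith) (by linarith)))
    have hanti : Antitone (fun n : ℕ => Ioc (x - (s₀ + 1/(n+1))) (x + (s₀ + 1/(n+1)))) := by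
      intro n m hnm
      have hn0 : (0:ℝ) ≤ n := n.cast_nonneg
      have hc : (n : ℝ) ≤ m := Nat.cast_le.mpr hnm
      have hd : 1/((m:ℝ)+1) ≤ 1/((n:ℝ)+1) := by
        apply one_div_le_one_div_of_le <;> linarith
      exact Ioc_subset_Ioc (by linarith) (by linarith)
    have hint : (⋂ n : ℕ, Ioc (x - (s₀ + 1/(n+1))) (x + (s₀ + 1/(n+1)))) =
        Icc (x - s₀) (x + s₀) := by
      ext t
      simp only [mem_iInter, mem_Ioc, mem_Icc]
      constructor
      · intro h
        refine ⟨?_, ?_⟩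
        · exact auxLem_forall_one_div fun n => by have := (h n).1; linarith
        · by_contra h'
          push_neg at h'
          obtain ⟨m, hm⟩ := exists_nat_one_div_lt (sub_pos.mpr h')
          have := (h m).2
          linarith
      · intro h n
        have h1 : (0:ℝ) < 1/((n:ℝ)+1) := by positivity
        exact ⟨by linarith [h.1], by linarith [h.2]⟩
    have hmeas := Directed.measure_iInter (fun n => measurableSet_Ioc.nullMeasurableSet)
      hanti.directed_ge ⟨0, hfin _ _⟩
    rw [hint] at hmeas
    have h1 : 1 ≤ μ (Icc (x - s₀) (x + s₀)) := hmeas ▸ le_iInf hseq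
    have hsub : Icc (x - s₀) (x + s₀) ⊆ {x - s₀} ∪ Ioc (x - s₀) (x + s₀) := by
      intro t ht
      rcases eq_or_lt_of_le ht.1 with h | h
      · exact Or.inl (mem_singleton_iff.mpr h.symm)
      · exact Or.inr ⟨h, ht.2⟩
    have h2 : μ (Icc (x - s₀) (x + s₀)) ≤ μ {x - s₀} + μ (Ioc (x - s₀) (x + s₀)) :=
      (measure_mono hsub).trans (measure_union_le _ _)
    rw [hatom, zero_add] at h2
    exact h1.trans h2
  -- upper bound
  have hle : μ (Ioc (x - s₀) (x + s₀)) ≤ 1 := by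
    have hseq : ∀ n : ℕ, μ (Ioc (x - (s₀ - 1/(n+1))) (x + (s₀ - 1/(n+1)))) ≤ 1 := by
      intro n
      have h1 : (0:ℝ) < 1/((n:ℝ)+1) := by positivity
      have hnot : s₀ - 1/(n+1) ∉ S := by
        intro hmem
        have := csInf_le hbdd hmem
        rw [← hs₀def] at this
        linarith
      rw [hmemS] at hnot
      exact (not_le.mp hnot).le
    have hmono2 : Monotone (fun n : ℕ => Ioc (x - (s₀ - 1/(n+1))) (x + (s₀ - 1/(n+1)))) := by
      intro n m hnm
      have hn0 : (0:ℝ) ≤ n := n.cast_nonneg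
      have hc : (n : ℝ) ≤ m := Nat.cast_le.mpr hnm
      have hd : 1/((m:ℝ)+1) ≤ 1/((n:ℝ)+1) := by
        apply one_div_le_one_div_of_le <;> linarith
      exact Ioc_subset_Ioc (by linarith) (by linarith)
    have hun : (⋃ n : ℕ, Ioc (x - (s₀ - 1/(n+1))) (x + (s₀ - 1/(n+1)))) =
        Ioo (x - s₀) (x + s₀) := by
      ext t
      simp only [mem_iUnion, mem_Ioc, mem_Ioo]
      constructor
      · rintro ⟨n, h1, h2⟩
        have h3 : (0:ℝ) < 1/((n:ℝ)+1) := by positivity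
        exact ⟨by linarith, by linarith⟩
      · rintro ⟨h1, h2⟩
        obtain ⟨n, hn⟩ := exists_nat_one_div_lt
          (show (0:ℝ) < min (t - (x - s₀)) ((x + s₀) - t) by
            apply lt_min <;> linarith)
        have hn1 : 1/((n:ℝ)+1) < t - (x - s₀) := hn.trans_le (min_le_left _ _)
        have hn2 : 1/((n:ℝ)+1) < (x + s₀) - t := hn.trans_le (min_le_right _ _)
        exact ⟨n, by linarith, by linarith⟩
    have hmeas := Directed.measure_iUnion (μ := μ) hmono2.directed_le
    rw [hun] at hmeas
    have h1 : μ (Ioo (x - s₀) (x + s₀)) ≤ 1 := hmeas ▸ iSup_le hseq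
    have hsub : Ioc (x - s₀) (x + s₀) ⊆ Ioo (x - s₀) (x + s₀) ∪ {x + s₀} := by
      intro t ht
      rcases lt_or_eq_of_le ht.2 with h | h
      · exact Or.inl ⟨ht.1, h⟩
      · exact Or.inr (mem_singleton_iff.mpr h)
    calc μ (Ioc (x - s₀) (x + s₀))
        ≤ μ (Ioo (x - s₀) (x + s₀)) + μ {x + s₀} :=
          (measure_mono hsub).trans (measure_union_le _ _)
      _ ≤ 1 := by rw [hatom, add_zero]; exact h1
  exact ⟨s₀, hs₀pos, le_antisymm hle hge⟩

end AuxLemmasForLemma210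

/-- **Lemma 2.10 / §6** (in the generality used in the paper).  Let
`g : ℝ → [0,∞]` be measurable, a.e. positive, locally integrable, with
`∫_{-∞}^0 g = ∫_0^∞ g = ∞`.  Then for every `x` the equation
`∫_{x-s}^{x+s} g = 1` has a unique solution `s(x) ∈ (0,∞)`, and the function
`s` satisfies `|s(x+t) − s(x)| ≤ |t|` for `|t| ≤ s(x)`; in particular `s` is
continuous. -/
theorem exists_unique_s_and_lipschitz_property
    (g : ℝ → ℝ≥0∞) (hg : Measurable g)
    (hpos : ∀ᵐ t ∂(volume : Measure ℝ), 0 < g t)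
    (hloc : ∀ a b : ℝ, (∫⁻ t in Set.Icc a b, g t) < ⊤)
    (hbot : (∫⁻ t in Set.Iic (0:ℝ), g t) = ⊤)
    (htop : (∫⁻ t in Set.Ici (0:ℝ), g t) = ⊤) :
    ∃ s : ℝ → ℝ,
      (∀ x : ℝ, (0 < s x ∧ (∫⁻ t in Set.Ioc (x - s x) (x + s x), g t) = 1) ∧
        ∀ s' : ℝ, 0 < s' → (∫⁻ t in Set.Ioc (x - s') (x + s'), g t) = 1 →
          s' = s x) ∧
      (∀ x t : ℝ, |t| ≤ s x → |s (x + t) - s x| ≤ |t|) ∧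
      Continuous s := by
  set μ : Measure ℝ := volume.withDensity g with hμ
  have hμapp : ∀ u : Set ℝ, MeasurableSet u → μ u = ∫⁻ t in u, g t := fun u hu =>
    withDensity_apply g hu
  have hfin : ∀ a b : ℝ, μ (Set.Ioc a b) ≠ ⊤ := by
    intro a b
    rw [hμapp _ measurableSet_Ioc]
    exact ((lintegral_mono_set Set.Ioc_subset_Icc_self).trans_lt (hloc a b)).ne
  have hposμ : ∀ a b : ℝ, a < b → 0 < μ (Set.Ioc a b) := by
    intro a b hab
    rw [hμapp _ measurableSet_Ioc, pos_iff_ne_zero]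
    intro h0
    rw [lintegral_eq_zero_iff hg] at h0
    have hp : ∀ᵐ t ∂((volume : Measure ℝ).restrict (Set.Ioc a b)), 0 < g t := ae_restrict_of_ae hpos
    have hfalse : ∀ᵐ t ∂((volume : Measure ℝ).restrict (Set.Ioc a b)), False := by
      filter_upwards [h0, hp] with t h1 h2
      exact absurd h2 (by simp [h1])
    have hz : (volume : Measure ℝ).restrict (Set.Ioc a b) Set.univ = 0 := by
      have h3 := ae_iff.mp hfalse
      simp only [not_false_iff, Set.setOf_true] at h3
      exact h3
    rw [Measure.restrict_apply_univ] at hz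
    rw [Real.volume_Ioc] at hz
    exact absurd hz (ENNReal.ofReal_pos.mpr (sub_pos.mpr hab)).ne'
  have hatomμ : ∀ y : ℝ, μ {y} = 0 := fun y => by
    rw [hμapp _ (measurableSet_singleton y)]
    exact setLIntegral_measure_zero _ _ (measure_singleton y)
  have hbotμ : μ (Set.Iic 0) = ⊤ := by rw [hμapp _ measurableSet_Iic]; exact hbot
  choose s hs1 hs2 using fun x => auxLem_exists μ hfin hposμ hatomμ hbotμ x
  -- Lipschitz-type bound
  have hlip : ∀ x t : ℝ, |t| ≤ s x → |s (x + t) - s x| ≤ |t| := by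
    intro x t ht
    have habs : 0 ≤ |t| := abs_nonneg t
    have hub : s (x + t) ≤ s x + |t| := by
      by_contra h
      push_neg at h
      have hlt : 0 < s x + |t| := by linarith [hs1 x]
      have hstrict := auxLem_strict μ hfin hposμ (x + t) (s x + |t|) (s (x + t)) hlt h
      rw [hs2 (x + t)] at hstrict
      have hsub : Set.Ioc (x - s x) (x + s x) ⊆
          Set.Ioc (x + t - (s x + |t|)) (x + t + (s x + |t|)) :=
        Set.Ioc_subset_Ioc (by rcases abs_cases t with ⟨h1, _⟩ | ⟨h1, _⟩ <;> linarith)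
          (by rcases abs_cases t with ⟨h1, _⟩ | ⟨h1, _⟩ <;> linarith)
      have hge1 := measure_mono (μ := μ) hsub
      rw [hs2 x] at hge1
      exact lt_irrefl _ (hge1.trans_lt hstrict)
    have hlbd : s x - |t| ≤ s (x + t) := by
      rcases le_or_gt (s x - |t|) 0 with h0 | h0
      · linarith [hs1 (x + t)]
      · by_contra h
        push_neg at h
        have hstrict := auxLem_strict μ hfin hposμ (x + t) (s (x + t)) (s x - |t|)
          (hs1 (x + t)) h
        rw [hs2 (x + t)] at hstrict
        have hsub : Set.Ioc (x + t - (s x - |t|)) (x + t + (s x - |t|)) ⊆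
            Set.Ioc (x - s x) (x + s x) :=
          Set.Ioc_subset_Ioc (by rcases abs_cases t with ⟨h1, _⟩ | ⟨h1, _⟩ <;> linarith)
            (by rcases abs_cases t with ⟨h1, _⟩ | ⟨h1, _⟩ <;> linarith)
        have hle1 := measure_mono (μ := μ) hsub
        rw [hs2 x] at hle1
        exact lt_irrefl _ (hstrict.trans_le hle1)
    rw [abs_sub_le_iff]
    exact ⟨by linarith, by linarith⟩
  refine ⟨s, ?_, hlip, ?_⟩
  · intro x
    refine ⟨⟨hs1 x, by rw [← hμapp _ measurableSet_Ioc]; exact hs2 x⟩, ?_⟩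
    intro s' hs' h1
    have h1' : μ (Set.Ioc (x - s') (x + s')) = 1 := by
      rw [hμapp _ measurableSet_Ioc]; exact h1
    rcases lt_trichotomy s' (s x) with h | h | h
    · have := auxLem_strict μ hfin hposμ x s' (s x) hs' h
      rw [h1', hs2 x] at this
      exact absurd this (lt_irrefl _)
    · exact h
    · have := auxLem_strict μ hfin hposμ x (s x) s' (hs1 x) h
      rw [h1', hs2 x] at this
      exact absurd this (lt_irrefl _)
  · rw [Metric.continuous_iff]
    intro x ε hε
    refine ⟨min (s x) ε, lt_min (hs1 x) hε, ?_⟩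
    intro y hy
    rw [Real.dist_eq] at hy ⊢
    have h1 : |y - x| ≤ s x := le_of_lt (hy.trans_le (min_le_left _ _))
    have h2 := hlip x (y - x) h1
    have hxy : x + (y - x) = y := by ring
    rw [hxy] at h2
    exact (h2.trans_lt (hy.trans_le (min_le_right _ _)))
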